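/- With the definitions below, for every r ≥ R₂ one has c·f(r) + f′(r)·(r·κ(r) + A) ≤ 0, where f′(r) = φ(R₁)·g(R₂) is the (constant) derivative of f on (R₂,∞). -/

import Mathlib

/-- `κ*(r) = κ(r)` if `r·κ(r) ≥ −A`, and `κ*(r) = −A/r` otherwise. -/
noncomputable def kstar (κ : ℝ → ℝ) (A r : ℝ) : ℝ :=
  if -A ≤ r * κ r then κ r else -A / r

/-- `φ(r) = exp(−(2/D²) ∫₀ʳ (u·κ*(u) + A) du)`. -/
noncomputable def phi (κ : ℝ → ℝ) (A D r : ℝ) : ℝ :=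
  Real.exp (-(2 / D ^ 2) * ∫ u in (0:ℝ)..r, (u * kstar κ A u + A))

/-- `Φ(r) = ∫₀ʳ φ(s) ds`. -/
noncomputable def PhiF (κ : ℝ → ℝ) (A D r : ℝ) : ℝ :=
  ∫ s in (0:ℝ)..r, phi κ A D s

/-- `c = D² / (4 ∫₀^{R₂} Φ(s) φ(s)⁻¹ ds)`. -/
noncomputable def cconst (κ : ℝ → ℝ) (A D R₂ : ℝ) : ℝ :=
  D ^ 2 / (4 * ∫ s in (0:ℝ)..R₂, PhiF κ A D s * (phi κ A D s)⁻¹)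

/-- `g(r) = 1 − (2c/D²) ∫₀ʳ Φ(s) φ(s)⁻¹ ds`. -/
noncomputable def gfun (κ : ℝ → ℝ) (A D R₂ r : ℝ) : ℝ :=
  1 - (2 * cconst κ A D R₂ / D ^ 2) * ∫ s in (0:ℝ)..r, PhiF κ A D s * (phi κ A D s)⁻¹

/-- `f(r) = ∫₀ʳ φ(s)·g(s ∧ R₂) ds`. -/
noncomputable def ffun (κ : ℝ → ℝ) (A D R₂ r : ℝ) : ℝ :=
  ∫ s in (0:ℝ)..r, phi κ A D s * gfun κ A D R₂ (min s R₂)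

open MeasureTheory intervalIntegral Set

section Aux

variable {κ : ℝ → ℝ} {A D : ℝ}

lemma kstar_eq (hA : 0 ≤ A) {u : ℝ} (hu : 0 ≤ u) :
    u * kstar κ A u + A = max (u * κ u + A) 0 := by
  unfold kstar
  split_ifs with h
  · rw [max_eq_left]; linarith
  · push_neg at h
    have hu0 : u ≠ 0 := by rintro rfl; simp at h; linarith
    rw [max_eq_right (by linarith)]
    field_simp
    ring

lemma uIcc_subset_Ici {a b : ℝ} (ha : 0 ≤ a) (hb : 0 ≤ b) :
    Set.uIcc a b ⊆ Set.Ici (0:ℝ) := by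
  intro x hx
  rw [Set.mem_uIcc] at hx
  rcases hx with ⟨h, _⟩ | ⟨h, _⟩
  · exact ha.trans h
  · exact hb.trans h

lemma kstar_ii (hA : 0 ≤ A) (hκc : ContinuousOn κ (Set.Ici 0))
    {a b : ℝ} (ha : 0 ≤ a) (hb : 0 ≤ b) :
    IntervalIntegrable (fun u => u * kstar κ A u + A) volume a b := by
  have hcont : ContinuousOn (fun u => max (u * κ u + A) 0) (Set.Ici 0) :=
    (continuous_id.max continuous_const).comp_continuousOn
      ((continuousOn_id.mul hκc).add continuousOn_const)
  have : ContinuousOn (fun u => u * kstar κ A u + A) (Set.Ici 0) :=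
    hcont.congr (fun u hu => kstar_eq hA hu)
  exact (this.mono (uIcc_subset_Ici ha hb)).intervalIntegrable

lemma H_mono (hA : 0 ≤ A) (hκc : ContinuousOn κ (Set.Ici 0))
    {a b : ℝ} (ha : 0 ≤ a) (hab : a ≤ b) :
    (∫ u in (0:ℝ)..a, (u * kstar κ A u + A)) ≤ ∫ u in (0:ℝ)..b, (u * kstar κ A u + A) := by
  have hb : 0 ≤ b := ha.trans hab
  have hsplit := integral_add_adjacent_intervals (μ := volume)
    (kstar_ii hA hκc le_rfl ha) (kstar_ii hA hκc ha hb)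
  have hnn : 0 ≤ ∫ u in a..b, (u * kstar κ A u + A) := by
    apply intervalIntegral.integral_nonneg hab
    intro u hu
    rw [kstar_eq hA (ha.trans hu.1)]
    exact le_max_right _ _
  linarith [hsplit]

lemma phi_pos (r : ℝ) : 0 < phi κ A D r := Real.exp_pos _

lemma phi_anti (hA : 0 ≤ A) (hD : D ≠ 0) (hκc : ContinuousOn κ (Set.Ici 0))
    {a b : ℝ} (ha : 0 ≤ a) (hab : a ≤ b) :
    phi κ A D b ≤ phi κ A D a := by
  unfold phi
  apply Real.exp_le_exp.2
  have h2 : (0:ℝ) < 2 / D ^ 2 := by positivity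
  have := H_mono (κ := κ) hA hκc ha hab
  nlinarith

lemma phi_antitoneOn (hA : 0 ≤ A) (hD : D ≠ 0) (hκc : ContinuousOn κ (Set.Ici 0)) :
    AntitoneOn (phi κ A D) (Set.Ici 0) :=
  fun a ha _ _ hab => phi_anti hA hD hκc ha hab

lemma phi_ii (hA : 0 ≤ A) (hD : D ≠ 0) (hκc : ContinuousOn κ (Set.Ici 0))
    {a b : ℝ} (ha : 0 ≤ a) (hb : 0 ≤ b) :
    IntervalIntegrable (phi κ A D) volume a b :=
  ((phi_antitoneOn hA hD hκc).mono (uIcc_subset_Ici ha hb)).intervalIntegrable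

/-- φ is constant equal to φ(R₁) for s ≥ R₁. -/
lemma phi_const (hA : 0 ≤ A) (hκc : ContinuousOn κ (Set.Ici 0))
    {R₁ : ℝ} (hR₁pos : 0 < R₁) (hR₁' : ∀ r, R₁ ≤ r → r * κ r ≤ -A)
    {s : ℝ} (hs : R₁ ≤ s) : phi κ A D s = phi κ A D R₁ := by
  unfold phi
  congr 1
  have hsplit := integral_add_adjacent_intervals (μ := volume)
    (kstar_ii hA hκc le_rfl hR₁pos.le) (kstar_ii hA hκc hR₁pos.le (hR₁pos.le.trans hs))
  have hz : (∫ u in R₁..s, (u * kstar κ A u + A)) = 0 := by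
    rw [intervalIntegral.integral_congr (g := fun _ => (0:ℝ))]
    · simp
    · intro u hu
      rw [Set.uIcc_of_le hs] at hu
      have hu1 : R₁ ≤ u := hu.1
      show u * kstar κ A u + A = 0
      rw [kstar_eq hA (hR₁pos.le.trans hu1)]
      have := hR₁' u hu1
      rw [max_eq_right (by linarith)]
  rw [← hsplit, hz, add_zero]

lemma integral_phi_le (hA : 0 ≤ A) (hD : D ≠ 0) (hκc : ContinuousOn κ (Set.Ici 0))
    {a b : ℝ} (ha : 0 ≤ a) (hab : a ≤ b) :
    (∫ s in a..b, phi κ A D s) ≤ (b - a) * phi κ A D a := by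
  have := intervalIntegral.integral_mono_on hab (phi_ii hA hD hκc ha (ha.trans hab))
    (_root_.intervalIntegrable_const (c := phi κ A D a))
    (fun x hx => phi_anti hA hD hκc ha hx.1)
  simpa [smul_eq_mul] using this

lemma le_integral_phi (hA : 0 ≤ A) (hD : D ≠ 0) (hκc : ContinuousOn κ (Set.Ici 0))
    {a b : ℝ} (ha : 0 ≤ a) (hab : a ≤ b) :
    (b - a) * phi κ A D b ≤ ∫ s in a..b, phi κ A D s := by
  have := intervalIntegral.integral_mono_on hab
    (_root_.intervalIntegrable_const (c := phi κ A D b))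
    (phi_ii hA hD hκc ha (ha.trans hab))
    (fun x hx => phi_anti hA hD hκc (ha.trans hx.1) hx.2)
  simpa [smul_eq_mul] using this

lemma PhiF_add (hA : 0 ≤ A) (hD : D ≠ 0) (hκc : ContinuousOn κ (Set.Ici 0))
    {a b : ℝ} (ha : 0 ≤ a) (hab : a ≤ b) :
    PhiF κ A D b = PhiF κ A D a + ∫ s in a..b, phi κ A D s := by
  unfold PhiF
  rw [← integral_add_adjacent_intervals (μ := volume)
    (phi_ii hA hD hκc le_rfl ha) (phi_ii hA hD hκc ha (ha.trans hab))]

lemma PhiF_nonneg (hA : 0 ≤ A) {r : ℝ} (hr : 0 ≤ r) : 0 ≤ PhiF κ A D r :=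
  intervalIntegral.integral_nonneg hr (fun u _ => (phi_pos u).le)

lemma PhiF_mono (hA : 0 ≤ A) (hD : D ≠ 0) (hκc : ContinuousOn κ (Set.Ici 0))
    {a b : ℝ} (ha : 0 ≤ a) (hab : a ≤ b) :
    PhiF κ A D a ≤ PhiF κ A D b := by
  rw [PhiF_add hA hD hκc ha hab]
  have : 0 ≤ ∫ s in a..b, phi κ A D s :=
    intervalIntegral.integral_nonneg hab (fun u _ => (phi_pos u).le)
  linarith

lemma PhiF_pos (hA : 0 ≤ A) (hD : D ≠ 0) (hκc : ContinuousOn κ (Set.Ici 0))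
    {r : ℝ} (hr : 0 < r) : 0 < PhiF κ A D r := by
  have := le_integral_phi hA hD hκc le_rfl hr.le
  have hp := phi_pos (κ := κ) (A := A) (D := D) r
  unfold PhiF
  nlinarith

/-- Concavity lower bound: `s·Φ(R₂) ≤ R₂·Φ(s)` for `0 ≤ s ≤ R₂`. -/
lemma PhiF_concave_lower (hA : 0 ≤ A) (hD : D ≠ 0) (hκc : ContinuousOn κ (Set.Ici 0))
    {s R₂ : ℝ} (hs : 0 ≤ s) (hsR : s ≤ R₂) :
    s * PhiF κ A D R₂ ≤ R₂ * PhiF κ A D s := by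
  have h1 : s * phi κ A D s ≤ PhiF κ A D s := by
    have := le_integral_phi hA hD hκc le_rfl hs
    unfold PhiF; simpa using this
  have h2 : PhiF κ A D R₂ ≤ PhiF κ A D s + (R₂ - s) * phi κ A D s := by
    rw [PhiF_add hA hD hκc hs hsR]
    have := integral_phi_le hA hD hκc hs hsR
    linarith
  have hp := (phi_pos (κ := κ) (A := A) (D := D) s).le
  nlinarith

end Aux

section Main

variable {κ : ℝ → ℝ} {A D R₁ R₂ : ℝ}

/-- Concavity upper bound beyond `R₂`. -/
lemma PhiF_concave_upper (hA : 0 ≤ A) (hD : D ≠ 0) (hκc : ContinuousOn κ (Set.Ici 0))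
    (hR₁pos : 0 < R₁) (hR₁' : ∀ r, R₁ ≤ r → r * κ r ≤ -A)
    (hR₁₂ : R₁ ≤ R₂) {r : ℝ} (hr : R₂ ≤ r) :
    R₂ * PhiF κ A D r ≤ r * PhiF κ A D R₂ := by
  have hR₂pos : 0 < R₂ := hR₁pos.trans_le hR₁₂
  have heq : (∫ s in R₂..r, phi κ A D s) = (r - R₂) * phi κ A D R₁ := by
    rw [intervalIntegral.integral_congr (g := fun _ => phi κ A D R₁)]
    · simp [smul_eq_mul]
    · intro u hu
      rw [Set.uIcc_of_le hr] at hu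
      exact phi_const hA hκc hR₁pos hR₁' (hR₁₂.trans hu.1)
  have hadd : PhiF κ A D r = PhiF κ A D R₂ + (r - R₂) * phi κ A D R₁ := by
    rw [PhiF_add hA hD hκc hR₂pos.le hr, heq]
  have h1 : R₂ * phi κ A D R₁ ≤ PhiF κ A D R₂ := by
    have := le_integral_phi hA hD hκc le_rfl hR₂pos.le
    rw [phi_const hA hκc hR₁pos hR₁' hR₁₂] at this
    unfold PhiF; simpa using this
  nlinarith [(phi_pos (κ := κ) (A := A) (D := D) R₁).le]

/-- Integrability of `Φ·φ⁻¹` on subintervals of `[0,∞)`. -/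
lemma q_ii (hA : 0 ≤ A) (hD : D ≠ 0) (hκc : ContinuousOn κ (Set.Ici 0))
    {a b : ℝ} (ha : 0 ≤ a) (hb : 0 ≤ b) :
    IntervalIntegrable (fun s => PhiF κ A D s * (phi κ A D s)⁻¹) volume a b := by
  have hmono : MonotoneOn (fun s => PhiF κ A D s * (phi κ A D s)⁻¹) (Set.Ici 0) := by
    intro x hx y hy hxy
    have h1 : PhiF κ A D x ≤ PhiF κ A D y := PhiF_mono hA hD hκc hx hxy
    have h2 : (phi κ A D x)⁻¹ ≤ (phi κ A D y)⁻¹ :=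
      inv_anti₀ (phi_pos y) (phi_anti hA hD hκc hx hxy)
    have := PhiF_nonneg (κ := κ) (D := D) hA hx
    have := (inv_pos.2 (phi_pos (κ := κ) (A := A) (D := D) x)).le
    exact mul_le_mul h1 h2 (by assumption) ((PhiF_nonneg hA hy))
  exact (hmono.mono (uIcc_subset_Ici ha hb)).intervalIntegrable

lemma q_nonneg (hA : 0 ≤ A) (s : ℝ) (hs : 0 ≤ s) :
    0 ≤ PhiF κ A D s * (phi κ A D s)⁻¹ :=
  mul_nonneg (PhiF_nonneg hA hs) (inv_pos.2 (phi_pos s)).le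

end Main

set_option maxHeartbeats 2000000 in
/-- The estimate (e2:3.30): for every `r ≥ R₂`,
`c·f(r) + f′(r)·(r·κ(r) + A) ≤ 0`, where `f′(r) = φ(R₁)·g(R₂)` is the
constant derivative of `f` on `(R₂,∞)`. -/
theorem cf_plus_fprime_nonpos_beyond_R2
    (κ : ℝ → ℝ) (A D R₁ R₂ : ℝ)
    (hA : 0 ≤ A) (hD : 0 < D)
    (hκc : ContinuousOn κ (Set.Ici 0))
    (hκb : ∃ C, ∀ r, 0 ≤ r → |κ r| ≤ C)
    (hR₁ : 1 ≤ R₁) (hR₁' : ∀ r, R₁ ≤ r → r * κ r ≤ -A)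
    (hR₂ : R₁ < R₂)
    (hR₂' : ∀ r, R₂ ≤ r → κ r ≤ -(D ^ 2 / (R₂ * (R₂ - R₁)) + A / R₂)) :
    ∀ r, R₂ ≤ r →
      cconst κ A D R₂ * ffun κ A D R₂ r
        + phi κ A D R₁ * gfun κ A D R₂ R₂ * (r * κ r + A) ≤ 0 := by
  intro r hr
  have hD' : D ≠ 0 := hD.ne'
  have hR₁pos : (0:ℝ) < R₁ := by linarith
  have hR₂pos : (0:ℝ) < R₂ := by linarith
  have hr0 : (0:ℝ) ≤ r := by linarith
  obtain ⟨Φ₂, hΦ₂def⟩ : ∃ x, x = PhiF κ A D R₂ := ⟨_, rfl⟩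
  obtain ⟨φ₁, hφ₁def⟩ : ∃ x, x = phi κ A D R₁ := ⟨_, rfl⟩
  obtain ⟨I, hIdef⟩ : ∃ x, x = ∫ s in (0:ℝ)..R₂, PhiF κ A D s * (phi κ A D s)⁻¹ := ⟨_, rfl⟩
  have hφ₁ : 0 < φ₁ := hφ₁def ▸ phi_pos R₁
  have hΦ₂ : 0 < Φ₂ := hΦ₂def ▸ PhiF_pos hA hD' hκc hR₂pos
  obtain ⟨K, hKdef⟩ : ∃ x, x = Φ₂ / R₂ * φ₁⁻¹ := ⟨_, rfl⟩
  have hIsplit : I = (∫ s in (0:ℝ)..R₁, PhiF κ A D s * (phi κ A D s)⁻¹)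
      + ∫ s in R₁..R₂, PhiF κ A D s * (phi κ A D s)⁻¹ := by
    rw [hIdef, ← integral_add_adjacent_intervals (μ := volume)
      (q_ii hA hD' hκc le_rfl hR₁pos.le) (q_ii hA hD' hκc hR₁pos.le hR₂pos.le)]
  have hA₀ : 0 ≤ ∫ s in (0:ℝ)..R₁, PhiF κ A D s * (phi κ A D s)⁻¹ :=
    intervalIntegral.integral_nonneg hR₁pos.le (fun u hu => q_nonneg hA u hu.1)
  have hseg : K * (R₂ ^ 2 - R₁ ^ 2) / 2
      ≤ ∫ s in R₁..R₂, PhiF κ A D s * (phi κ A D s)⁻¹ := by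
    have hmono := intervalIntegral.integral_mono_on hR₂.le
      (Continuous.intervalIntegrable (continuous_const.mul continuous_id :
        Continuous (fun s : ℝ => K * s)) R₁ R₂)
      (q_ii hA hD' hκc hR₁pos.le hR₂pos.le)
      (fun s hs => by
        have hs0 : (0:ℝ) ≤ s := hR₁pos.le.trans hs.1
        rw [phi_const hA hκc hR₁pos hR₁' hs.1, ← hφ₁def]
        have key := PhiF_concave_lower (D := D) hA hD' hκc hs0 hs.2
        rw [← hΦ₂def] at key
        have h1 : Φ₂ / R₂ * s ≤ PhiF κ A D s := by
          rw [div_mul_eq_mul_div, div_le_iff₀ hR₂pos]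
          nlinarith [key]
        calc K * s = (Φ₂ / R₂ * s) * φ₁⁻¹ := by rw [hKdef]; ring
          _ ≤ PhiF κ A D s * φ₁⁻¹ :=
            mul_le_mul_of_nonneg_right h1 (inv_nonneg.2 hφ₁.le))
    simp only [Pi.mul_apply] at hmono
    rwa [intervalIntegral.integral_const_mul, integral_id, ← mul_div_assoc] at hmono
  have hφK : φ₁ * K = Φ₂ / R₂ := by
    rw [hKdef]; field_simp
  have hdivb : Φ₂ * (R₂ - R₁) ≤ Φ₂ / R₂ * (R₂ ^ 2 - R₁ ^ 2) := by
    rw [div_mul_eq_mul_div, le_div_iff₀ hR₂pos]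
    nlinarith [mul_nonneg (mul_nonneg hΦ₂.le hR₁pos.le)
      (by linarith : (0:ℝ) ≤ R₂ - R₁)]
  have hIlow : Φ₂ * (R₂ - R₁) ≤ 2 * φ₁ * I := by
    have h2 : φ₁ * (K * (R₂ ^ 2 - R₁ ^ 2) / 2)
        ≤ φ₁ * ∫ s in R₁..R₂, PhiF κ A D s * (phi κ A D s)⁻¹ :=
      mul_le_mul_of_nonneg_left hseg hφ₁.le
    nlinarith [hA₀, hφ₁.le, hφK, hdivb, hIsplit]
  have hIpos : 0 < I := by nlinarith [hΦ₂, hφ₁]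
  have hIne : I ≠ 0 := hIpos.ne'
  have hc : 0 < cconst κ A D R₂ := by
    unfold cconst
    rw [← hIdef]
    positivity
  -- value of g at R₂
  have hgR₂ : gfun κ A D R₂ R₂ = 1 / 2 := by
    unfold gfun cconst
    rw [← hIdef]
    field_simp
    ring
  -- g is bounded on [0, R₂] and antitone
  have hk0 : 0 ≤ 2 * cconst κ A D R₂ / D ^ 2 := by positivity
  have hg_anti : ∀ a b : ℝ, 0 ≤ a → a ≤ b → gfun κ A D R₂ b ≤ gfun κ A D R₂ a := by
    intro a b ha hab
    unfold gfun
    have hsplit := integral_add_adjacent_intervals (μ := volume)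
      (q_ii hA hD' hκc le_rfl ha) (q_ii hA hD' hκc ha (ha.trans hab))
    have hnn : 0 ≤ ∫ s in a..b, PhiF κ A D s * (phi κ A D s)⁻¹ :=
      intervalIntegral.integral_nonneg hab (fun u hu => q_nonneg hA u (ha.trans hu.1))
    nlinarith [hsplit, hk0]
  have hg_le_one : ∀ s : ℝ, 0 ≤ s → gfun κ A D R₂ s ≤ 1 := by
    intro s hs
    unfold gfun
    have hnn : 0 ≤ ∫ u in (0:ℝ)..s, PhiF κ A D u * (phi κ A D u)⁻¹ :=
      intervalIntegral.integral_nonneg hs (fun u hu => q_nonneg hA u hu.1)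
    nlinarith [hk0]
  have hg_half : ∀ s : ℝ, 0 ≤ s → s ≤ R₂ → 1 / 2 ≤ gfun κ A D R₂ s := by
    intro s hs hsR
    have := hg_anti s R₂ hs hsR
    rw [hgR₂] at this
    linarith
  -- integrability of the integrand of f and the bound f ≤ Φ
  have hG_anti : AntitoneOn (fun s => phi κ A D s * gfun κ A D R₂ (min s R₂)) (Set.Ici 0) := by
    intro x hx y hy hxy
    simp only
    have hminx : (0:ℝ) ≤ min x R₂ := le_min hx hR₂pos.le
    have hminy : (0:ℝ) ≤ min y R₂ := le_min hy hR₂pos.le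
    have hgm : gfun κ A D R₂ (min y R₂) ≤ gfun κ A D R₂ (min x R₂) :=
      hg_anti _ _ hminx (min_le_min hxy le_rfl)
    have hgy : 0 ≤ gfun κ A D R₂ (min y R₂) := by
      have := hg_half (min y R₂) hminy (min_le_right _ _); linarith
    exact mul_le_mul (phi_anti hA hD' hκc hx hxy) hgm hgy (phi_pos x).le
  have hG_ii : IntervalIntegrable (fun s => phi κ A D s * gfun κ A D R₂ (min s R₂))
      volume 0 r :=
    ((hG_anti).mono (uIcc_subset_Ici le_rfl hr0)).intervalIntegrable
  have hf_le : ffun κ A D R₂ r ≤ PhiF κ A D r := by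
    unfold ffun PhiF
    apply intervalIntegral.integral_mono_on hr0 hG_ii (phi_ii hA hD' hκc le_rfl hr0)
    intro s hs
    have h1 : gfun κ A D R₂ (min s R₂) ≤ 1 :=
      hg_le_one _ (le_min hs.1 hR₂pos.le)
    exact mul_le_of_le_one_right (phi_pos s).le h1
  -- concavity upper bound at r
  have hconc : R₂ * PhiF κ A D r ≤ r * Φ₂ := by
    rw [hΦ₂def]
    exact PhiF_concave_upper hA hD' hκc hR₁pos hR₁' hR₂.le hr
  have hΦr : 0 ≤ PhiF κ A D r := PhiF_nonneg hA hr0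
  have hT : (0:ℝ) < R₂ * (R₂ - R₁) := by nlinarith
  -- part 1 : c * f r ≤ D² r φ₁ / (2 R₂ (R₂ - R₁))
  have part1 : cconst κ A D R₂ * ffun κ A D R₂ r
      ≤ D ^ 2 * r * φ₁ / (2 * (R₂ * (R₂ - R₁))) := by
    have step1 : cconst κ A D R₂ * ffun κ A D R₂ r
        ≤ cconst κ A D R₂ * PhiF κ A D r :=
      mul_le_mul_of_nonneg_left hf_le hc.le
    have step2 : cconst κ A D R₂ * PhiF κ A D r
        ≤ D ^ 2 * r * φ₁ / (2 * (R₂ * (R₂ - R₁))) := by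
      unfold cconst
      rw [← hIdef, div_mul_eq_mul_div, div_le_div_iff₀ (by positivity) (by positivity)]
      have k1 : R₂ * PhiF κ A D r * (R₂ - R₁) ≤ r * (Φ₂ * (R₂ - R₁)) := by
        nlinarith [mul_le_mul_of_nonneg_right hconc (by linarith : (0:ℝ) ≤ R₂ - R₁)]
      have k2 : r * (Φ₂ * (R₂ - R₁)) ≤ r * (2 * φ₁ * I) :=
        mul_le_mul_of_nonneg_left hIlow hr0
      nlinarith [mul_le_mul_of_nonneg_left (le_trans k1 k2) (sq_nonneg D)]
    linarith
  -- part 2 : φ₁ * (1/2) * (r κ r + A) ≤ - D² r φ₁ / (2 R₂ (R₂ - R₁))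
  have hκmul : κ r * (R₂ * (R₂ - R₁)) ≤ -(D ^ 2 + A * (R₂ - R₁)) := by
    have h := hR₂' r hr
    have h' := mul_le_mul_of_nonneg_right h hT.le
    have heq : (-(D ^ 2 / (R₂ * (R₂ - R₁)) + A / R₂)) * (R₂ * (R₂ - R₁))
        = -(D ^ 2 + A * (R₂ - R₁)) := by
      field_simp [(sub_pos.2 hR₂).ne']
    linarith [heq ▸ h']
  have hκA : (r * κ r + A) * (R₂ * (R₂ - R₁)) ≤ -(D ^ 2 * r) := by
    have h1 : r * (κ r * (R₂ * (R₂ - R₁))) ≤ r * (-(D ^ 2 + A * (R₂ - R₁))) :=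
      mul_le_mul_of_nonneg_left hκmul hr0
    nlinarith [h1, mul_nonneg (mul_nonneg hA (by linarith : (0:ℝ) ≤ R₂ - R₁))
      (by linarith : (0:ℝ) ≤ r - R₂)]
  have part2 : φ₁ * (1 / 2) * (r * κ r + A)
      ≤ -(D ^ 2 * r * φ₁ / (2 * (R₂ * (R₂ - R₁)))) := by
    have h2 : φ₁ * ((r * κ r + A) * (R₂ * (R₂ - R₁))) ≤ φ₁ * (-(D ^ 2 * r)) :=
      mul_le_mul_of_nonneg_left hκA hφ₁.le
    rw [le_neg, div_le_iff₀ (by positivity)]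
    nlinarith [h2]
  rw [hgR₂, ← hφ₁def]
  linarith [part1, part2]
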